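/- Let R = ℂ[x₁,x₂,x₃] and let φ ∈ R be nonconstant such that the set of common zeros in ℂ³ of ∂φ/∂x₁, ∂φ/∂x₂, ∂φ/∂x₃ is finite. Suppose β ∈ 𝔛^2 is an antisymmetric biderivation of R with β(φ,f) ∈ (φ) for all f ∈ R. Then the biderivation β₀ := d_φ X₃, where X₃ ∈ 𝔛^3 is chosen so that β = d_φ X₃ + φ·X₂ for some X₂ ∈ 𝔛^2, is a Poisson bracket on R (its Jacobiator vanishes identically), β₀ agrees with β modulo (φ), and β₀(φ, f) = 0 for all f ∈ R. -/

import Mathlib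

noncomputable section

open MvPolynomial

/-- The polynomial ring `R = ℂ[x₁,…,xₙ]`. -/
abbrev PR (n : ℕ) : Type := MvPolynomial (Fin n) ℂ

/-- `π : B × B → B` is a ℂ-bilinear antisymmetric map which is a derivation in
each argument. -/
def IsBiDerivation {B : Type*} [CommRing B] [Algebra ℂ B] (π : B → B → B) : Prop :=
  (∀ f g, π f g = - π g f) ∧
  (∀ f g h, π (f + g) h = π f h + π g h) ∧
  (∀ f g h, π f (g + h) = π f g + π f h) ∧
  (∀ (c : ℂ) (f g), π (c • f) g = c • π f g) ∧
  (∀ (c : ℂ) (f g), π f (c • g) = c • π f g) ∧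
  (∀ f g h, π (f * g) h = f * π g h + g * π f h) ∧
  (∀ f g h, π f (g * h) = g * π f h + h * π f g)

/-- A Poisson bracket on a commutative ℂ-algebra: a ℂ-bilinear antisymmetric
biderivation satisfying the Jacobi identity. -/
def IsPoissonBracket {B : Type*} [CommRing B] [Algebra ℂ B] (π : B → B → B) : Prop :=
  IsBiDerivation π ∧ ∀ f g h, π f (π g h) + π g (π h f) + π h (π f g) = 0
/-- `P : B^k → B` is a `k`-derivation: an alternating ℂ-multilinear map which is
a derivation (satisfies the Leibniz rule) in each argument.  The `B`-module of
`k`-derivations is `𝔛^k` (with `𝔛^0 = B`). -/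
def IsMultiDeriv {B : Type*} [CommRing B] [Algebra ℂ B] (k : ℕ) (P : (Fin k → B) → B) : Prop :=
  (∀ (v : Fin k → B) (i : Fin k) (g h : B),
      P (Function.update v i (g + h)) = P (Function.update v i g) + P (Function.update v i h)) ∧
  (∀ (v : Fin k → B) (i : Fin k) (c : ℂ) (g : B),
      P (Function.update v i (c • g)) = c • P (Function.update v i g)) ∧
  (∀ (v : Fin k → B) (i j : Fin k), i ≠ j → v i = v j → P v = 0) ∧
  (∀ (v : Fin k → B) (i : Fin k) (g h : B),
      P (Function.update v i (g * h)) = g * P (Function.update v i h) + h * P (Function.update v i g))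

/-- The Koszul differential `d_φ : 𝔛^{k+1} → 𝔛^k`, contraction with `dφ`:
`(d_φ P)(f₁,…,f_k) = P(φ, f₁,…,f_k)`. -/
def dphi {n k : ℕ} (φ : PR n) (P : (Fin (k + 1) → PR n) → PR n) :
    (Fin k → PR n) → PR n :=
  fun v => P (Fin.cons φ v)


-- ===================== auxiliary development =====================

section Helpers

lemma vec2_eta {A : Type*} (v : Fin 2 → A) : ![v 0, v 1] = v := by
  funext i; fin_cases i <;> rfl

lemma upd2_0 {A : Type*} (v : Fin 2 → A) (x : A) : Function.update v 0 x = ![x, v 1] := by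
  funext i; fin_cases i <;> simp [Function.update]

lemma upd2_1 {A : Type*} (v : Fin 2 → A) (x : A) : Function.update v 1 x = ![v 0, x] := by
  funext i; fin_cases i <;> simp [Function.update]

lemma upd3_0 {A : Type*} (v : Fin 3 → A) (x : A) : Function.update v 0 x = ![x, v 1, v 2] := by
  funext i; fin_cases i <;> simp [Function.update]

lemma upd3_1 {A : Type*} (v : Fin 3 → A) (x : A) : Function.update v 1 x = ![v 0, x, v 2] := by
  funext i; fin_cases i <;> simp [Function.update]

lemma upd3_2 {A : Type*} (v : Fin 3 → A) (x : A) : Function.update v 2 x = ![v 0, v 1, x] := by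
  funext i; fin_cases i <;> simp [Function.update]

lemma cons3 (a : PR 3) (v : Fin 2 → PR 3) : Fin.cons a v = ![a, v 0, v 1] := by
  funext i
  refine Fin.cases ?_ (fun j => ?_) i
  · rfl
  · fin_cases j <;> rfl

lemma pd_comm (i j : Fin 3) (g : PR 3) :
    pderiv i (pderiv j g) = pderiv j (pderiv i g) := by
  induction g using MvPolynomial.induction_on with
  | C a => simp
  | add p q hp hq => simp [hp, hq]
  | mul_X p k hp =>
    classical
    simp only [pderiv_mul, map_add, pderiv_mul, hp]
    simp [pderiv_X, Pi.single_apply, apply_ite (pderiv i), apply_ite (pderiv j)]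
    ring

lemma deriv_rep (d : PR 3 → PR 3)
    (hadd : ∀ a b, d (a + b) = d a + d b)
    (hsmul : ∀ (c : ℂ) a, d (c • a) = c • d a)
    (hmul : ∀ a b, d (a * b) = a * d b + b * d a)
    (g : PR 3) :
    d g = ∑ i : Fin 3, pderiv i g * d (X i) := by
  have h1 : d 1 = 0 := by
    have h := hmul 1 1
    rw [mul_one, one_mul] at h
    exact (right_eq_add.mp h)
  have hC : ∀ a : ℂ, d (C a) = 0 := by
    intro a
    have : (C a : PR 3) = a • 1 := by
      rw [smul_eq_C_mul, mul_one]
    rw [this, hsmul, h1, smul_zero]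
  induction g using MvPolynomial.induction_on with
  | C a => simp [hC]
  | add p q hp hq =>
    rw [hadd, hp, hq, ← Finset.sum_add_distrib]
    simp only [map_add]
    congr 1; funext i; ring
  | mul_X p k hp =>
    rw [hmul, hp]
    rw [Fin.sum_univ_three, Fin.sum_univ_three]
    fin_cases k <;>
      simp [pderiv_mul, pderiv_X, Pi.single_apply] <;> ring

end Helpers

section BD
variable {β : (Fin 2 → PR 3) → PR 3} (hβ : IsMultiDeriv 2 β)
include hβ

lemma bd_add1 (g g' h : PR 3) : β ![g + g', h] = β ![g, h] + β ![g', h] := by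
  have := hβ.1 ![0, h] 0 g g'
  simpa [upd2_0] using this

lemma bd_add2 (g h h' : PR 3) : β ![g, h + h'] = β ![g, h] + β ![g, h'] := by
  have := hβ.1 ![g, 0] 1 h h'
  simpa [upd2_1] using this

lemma bd_smul1 (c : ℂ) (g h : PR 3) : β ![c • g, h] = c • β ![g, h] := by
  have := hβ.2.1 ![0, h] 0 c g
  simpa [upd2_0] using this

lemma bd_smul2 (c : ℂ) (g h : PR 3) : β ![g, c • h] = c • β ![g, h] := by
  have := hβ.2.1 ![g, 0] 1 c h
  simpa [upd2_1] using this

lemma bd_mul1 (g g' h : PR 3) : β ![g * g', h] = g * β ![g', h] + g' * β ![g, h] := by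
  have := hβ.2.2.2 ![0, h] 0 g g'
  simpa [upd2_0] using this

lemma bd_mul2 (g h h' : PR 3) : β ![g, h * h'] = h * β ![g, h'] + h' * β ![g, h] := by
  have := hβ.2.2.2 ![g, 0] 1 h h'
  simpa [upd2_1] using this

lemma bd_alt (g : PR 3) : β ![g, g] = 0 :=
  hβ.2.2.1 ![g, g] 0 1 (by decide) rfl

lemma bd_antisym (g h : PR 3) : β ![g, h] = - β ![h, g] := by
  have h0 := bd_alt hβ (g + h)
  rw [bd_add1 hβ, bd_add2 hβ, bd_add2 hβ, bd_alt hβ, bd_alt hβ] at h0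
  linear_combination h0

lemma bd_rep (g h : PR 3) :
    β ![g, h] = ∑ i : Fin 3, ∑ j : Fin 3,
      pderiv i g * pderiv j h * β ![X i, X j] := by
  have step1 : β ![g, h] = ∑ i : Fin 3, pderiv i g * β ![X i, h] :=
    deriv_rep (fun g => β ![g, h]) (fun a b => bd_add1 hβ a b h)
      (fun c a => bd_smul1 hβ c a h) (fun a b => bd_mul1 hβ a b h) g
  rw [step1]
  congr 1; funext i
  have step2 : β ![X i, h] = ∑ j : Fin 3, pderiv j h * β ![X i, X j] :=
    deriv_rep (fun h => β ![X i, h]) (fun a b => bd_add2 hβ _ a b)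
      (fun c a => bd_smul2 hβ c _ a) (fun a b => bd_mul2 hβ _ a b) h
  rw [step2, Finset.mul_sum]
  congr 1; funext j; ring

end BD

lemma bd_ext {β γ : (Fin 2 → PR 3) → PR 3} (hβ : IsMultiDeriv 2 β)
    (hγ : IsMultiDeriv 2 γ) (h : ∀ i j : Fin 3, β ![X i, X j] = γ ![X i, X j]) :
    ∀ v, β v = γ v := by
  intro v
  rw [← vec2_eta v, bd_rep hβ, bd_rep hγ]
  simp only [h]

-- ===================== regularity lemmas =====================

lemma key_poly {S : Type*} [CommRing S] {u h : Polynomial S} (hu : u.Monic)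
    (J : Ideal S) (hm : u * h ∈ Ideal.map (Polynomial.C : S →+* Polynomial S) J) :
    h ∈ Ideal.map (Polynomial.C : S →+* Polynomial S) J := by
  rw [Ideal.mem_map_C_iff] at hm ⊢
  have hzero : (u * h).map (Ideal.Quotient.mk J) = 0 := by
    ext n
    simp only [Polynomial.coeff_map, Polynomial.coeff_zero]
    exact Ideal.Quotient.eq_zero_iff_mem.2 (hm n)
  rw [Polynomial.map_mul] at hzero
  have hmap0 : h.map (Ideal.Quotient.mk J) = 0 := by
    have hreg := (hu.map (Ideal.Quotient.mk J)).isRegular.left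
    apply hreg
    show _ * _ = _ * _
    rw [mul_zero]
    exact hzero
  intro n
  have : (h.map (Ideal.Quotient.mk J)).coeff n = 0 := by rw [hmap0]; simp
  rw [Polynomial.coeff_map] at this
  exact Ideal.Quotient.eq_zero_iff_mem.1 this

lemma mem_map_equiv_iff {R S : Type*} [CommRing R] [CommRing S] (e : R ≃+* S)
    (I : Ideal R) (x : R) : e x ∈ Ideal.map (e : R →+* S) I ↔ x ∈ I := by
  constructor
  · intro hx
    have := Ideal.mem_map_of_mem (e.symm : S →+* R) hx
    rw [Ideal.map_map] at this
    simpa using this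
  · exact fun hx => Ideal.mem_map_of_mem _ hx

lemma key_var (a : Fin 3) (u : Polynomial ℂ) (hu : u.Monic) (s : Set (PR 3))
    (hS : ∀ q ∈ s, ∃ (b : Fin 3) (w : Polynomial ℂ), b ≠ a ∧ q = Polynomial.aeval (X b) w)
    (h : PR 3) (hm : Polynomial.aeval (X a : PR 3) u * h ∈ Ideal.span s) :
    h ∈ Ideal.span s := by
  classical
  set e : PR 3 ≃ₐ[ℂ] Polynomial (PR 2) :=
    (renameEquiv ℂ (Equiv.swap a 0)).trans (MvPolynomial.finSuccEquiv ℂ 2) with he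
  have himg : ∀ q ∈ s, ∃ q' : PR 2, e q = Polynomial.C q' := by
    intro q hq
    obtain ⟨b, w, hba, rfl⟩ := hS q hq
    have hc0 : (Equiv.swap a 0) b ≠ 0 := by
      intro h0
      exact hba ((Equiv.swap a 0).injective (by rw [h0, Equiv.swap_apply_left]))
    obtain ⟨d, hd⟩ : ∃ d : Fin 2, (Equiv.swap a 0) b = d.succ :=
      ⟨((Equiv.swap a 0) b).pred hc0, (Fin.succ_pred _ _).symm⟩
    have heb : e (X b) = Polynomial.C (X d) := by
      simp only [he, AlgEquiv.trans_apply, renameEquiv_apply, rename_X]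
      rw [hd]
      exact MvPolynomial.finSuccEquiv_X_succ
    refine ⟨Polynomial.aeval (X d) w, ?_⟩
    rw [← Polynomial.aeval_algHom_apply e (X b) w, heb]
    simpa using Polynomial.aeval_algHom_apply (Polynomial.CAlgHom (R := ℂ) (A := PR 2)) (X d) w
  have hsub : e '' s ⊆ Set.range (Polynomial.C : PR 2 →+* Polynomial (PR 2)) := by
    rintro _ ⟨q, hq, rfl⟩
    obtain ⟨q', hq'⟩ := himg q hq
    exact ⟨q', hq'.symm⟩
  set J : Ideal (PR 2) := Ideal.span ((Polynomial.C : PR 2 →+* Polynomial (PR 2)) ⁻¹' (e '' s))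
    with hJ
  have hmapJ : Ideal.map (Polynomial.C : PR 2 →+* Polynomial (PR 2)) J = Ideal.span (e '' s) := by
    rw [hJ, Ideal.map_span]
    congr 1
    exact Set.image_preimage_eq_of_subset (by exact_mod_cast hsub)
  have hspan : Ideal.map (e.toRingEquiv : PR 3 →+* Polynomial (PR 2)) (Ideal.span s)
      = Ideal.span (e '' s) := by
    rw [Ideal.map_span]
    rfl
  have hea : e (Polynomial.aeval (X a : PR 3) u) = Polynomial.aeval Polynomial.X u := by
    have hXa : e (X a) = Polynomial.X := by
      simp only [he, AlgEquiv.trans_apply, renameEquiv_apply, rename_X, Equiv.swap_apply_left]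
      exact MvPolynomial.finSuccEquiv_X_zero
    rw [← Polynomial.aeval_algHom_apply e (X a) u, hXa]
  have hmonic : (Polynomial.aeval (Polynomial.X : Polynomial (PR 2)) u).Monic := by
    have : Polynomial.aeval (Polynomial.X : Polynomial (PR 2)) u
        = u.map (algebraMap ℂ (PR 2)) := by
      rw [← Polynomial.aeval_map_algebraMap (PR 2) (Polynomial.X : Polynomial (PR 2)) u,
        Polynomial.aeval_X_left_apply]
    rw [this]
    exact hu.map _
  have hm2 : e (Polynomial.aeval (X a : PR 3) u * h)
      ∈ Ideal.map (Polynomial.C : PR 2 →+* Polynomial (PR 2)) J := by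
    rw [hmapJ, ← hspan]
    exact (mem_map_equiv_iff e.toRingEquiv _ _).2 hm
  rw [map_mul, hea] at hm2
  have := key_poly hmonic J hm2
  rw [hmapJ, ← hspan] at this
  exact (mem_map_equiv_iff e.toRingEquiv _ _).1 this

-- ===================== monic polynomials in the gradient ideal =====================

lemma mv_eval_eq_aeval (x : Fin 3 → ℂ) (p : PR 3) : eval x p = MvPolynomial.aeval x p := by
  rw [← MvPolynomial.coe_aeval_eq_eval]
  rfl

lemma monic_in_ideal (φ : PR 3)
    (hfin : Set.Finite {x : Fin 3 → ℂ | ∀ i : Fin 3, eval x (pderiv i φ) = 0}) (j : Fin 3) :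
    ∃ u : Polynomial ℂ, u.Monic ∧
      Polynomial.aeval (X j : PR 3) u ∈ Ideal.span (Set.range fun i : Fin 3 => pderiv i φ) := by
  classical
  set I : Ideal (PR 3) := Ideal.span (Set.range fun i : Fin 3 => pderiv i φ) with hI
  have hzl : zeroLocus ℂ I = {x : Fin 3 → ℂ | ∀ i : Fin 3, eval x (pderiv i φ) = 0} := by
    rw [hI, zeroLocus_span]
    ext x
    simp
  set q : Polynomial ℂ := ∏ v ∈ hfin.toFinset, (Polynomial.X - Polynomial.C (v j)) with hq
  have hqm : q.Monic := Polynomial.monic_prod_of_monic _ _ fun v _ => Polynomial.monic_X_sub_C _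
  have hmem : Polynomial.aeval (X j : PR 3) q ∈ vanishingIdeal ℂ (zeroLocus ℂ I) := by
    rw [mem_vanishingIdeal_iff]
    intro x hx
    rw [← Polynomial.aeval_algHom_apply (MvPolynomial.aeval x) (X j) q]
    have : (MvPolynomial.aeval x) (X j : PR 3) = x j := by simp
    rw [this, Polynomial.coe_aeval_eq_eval, hq, Polynomial.eval_prod]
    refine Finset.prod_eq_zero (i := x) ((Set.Finite.mem_toFinset hfin).2 ?_) (by simp)
    rw [hzl] at hx; exact hx
  rw [vanishingIdeal_zeroLocus_eq_radical, Ideal.mem_radical_iff] at hmem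
  obtain ⟨n, hn⟩ := hmem
  exact ⟨q ^ n, hqm.pow n, by rw [map_pow]; exact hn⟩

-- ===================== syzygy lemmas =====================

section Syzygy
variable (p : Fin 3 → PR 3) (g1 g2 g3 : PR 3) (c1 c2 c3 : Fin 3 → PR 3)
variable (hg1 : g1 = c1 0 * p 0 + c1 1 * p 1 + c1 2 * p 2)
variable (hg2 : g2 = c2 0 * p 0 + c2 1 * p 1 + c2 2 * p 2)
variable (hg3 : g3 = c3 0 * p 0 + c3 1 * p 1 + c3 2 * p 2)
variable (hreg1 : g1 ≠ 0)
variable (hreg2 : ∀ h : PR 3, g2 * h ∈ Ideal.span {g1} → h ∈ Ideal.span {g1})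
variable (hreg3 : ∀ h : PR 3, g3 * h ∈ Ideal.span ({g1, g2} : Set (PR 3)) →
  h ∈ Ideal.span ({g1, g2} : Set (PR 3)))

include hg3 hreg3 in
lemma lemC (s : PR 3) (hs : ∀ i, s * p i ∈ Ideal.span ({g1, g2} : Set (PR 3))) :
    s ∈ Ideal.span ({g1, g2} : Set (PR 3)) := by
  apply hreg3
  have : g3 * s = c3 0 * (s * p 0) + c3 1 * (s * p 1) + c3 2 * (s * p 2) := by
    rw [hg3]; ring
  rw [this]
  exact add_mem (add_mem (Ideal.mul_mem_left _ _ (hs 0)) (Ideal.mul_mem_left _ _ (hs 1)))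
    (Ideal.mul_mem_left _ _ (hs 2))

include hg2 hg3 hreg2 hreg3 in
lemma lemB (A : Fin 3 → PR 3)
    (hA : ∀ i j, p i * A j - p j * A i ∈ Ideal.span ({g1} : Set (PR 3))) :
    ∃ (a : PR 3) (A' : Fin 3 → PR 3), ∀ j, A j = a * p j + g1 * A' j := by
  classical
  set b : PR 3 := c2 0 * A 0 + c2 1 * A 1 + c2 2 * A 2 with hb
  have claim1 : ∀ j, g2 * A j - b * p j ∈ Ideal.span ({g1} : Set (PR 3)) := by
    intro j
    have hrw : g2 * A j - b * p j =
        c2 0 * (p 0 * A j - p j * A 0) + c2 1 * (p 1 * A j - p j * A 1)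
          + c2 2 * (p 2 * A j - p j * A 2) := by
      rw [hg2, hb]; ring
    rw [hrw]
    exact add_mem (add_mem (Ideal.mul_mem_left _ _ (hA 0 j)) (Ideal.mul_mem_left _ _ (hA 1 j)))
      (Ideal.mul_mem_left _ _ (hA 2 j))
  have claim2 : ∀ j, b * p j ∈ Ideal.span ({g1, g2} : Set (PR 3)) := by
    intro j
    have : b * p j = g2 * A j - (g2 * A j - b * p j) := by ring
    rw [this]
    refine sub_mem (Ideal.mul_mem_right _ _ (Ideal.subset_span (by simp)))
      (Ideal.span_mono (by simp) (claim1 j))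
  have hbmem : b ∈ Ideal.span ({g1, g2} : Set (PR 3)) :=
    lemC p g1 g2 g3 c3 hg3 hreg3 b claim2
  obtain ⟨b1, b2, hbeq⟩ := Ideal.mem_span_pair.1 hbmem
  have key : ∀ j, A j - b2 * p j ∈ Ideal.span ({g1} : Set (PR 3)) := by
    intro j
    apply hreg2
    have : g2 * (A j - b2 * p j) = (g2 * A j - b * p j) + (b1 * p j) * g1 := by
      rw [← hbeq]; ring
    rw [this]
    exact add_mem (claim1 j) (Ideal.mem_span_singleton.2 ⟨b1 * p j, by ring⟩)
  have hch : ∀ j, ∃ t, A j - b2 * p j = g1 * t := by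
    intro j
    obtain ⟨t, ht⟩ := Ideal.mem_span_singleton.1 (key j)
    exact ⟨t, ht⟩
  choose A' hA' using hch
  exact ⟨b2, A', fun j => by linear_combination hA' j⟩

include hg1 hg2 hreg1 hreg2 in
lemma lemH2 (B : Fin 3 → PR 3) (hB : ∀ i j, p i * B j = p j * B i) :
    ∃ a : PR 3, ∀ i, B i = a * p i := by
  set b : PR 3 := c1 0 * B 0 + c1 1 * B 1 + c1 2 * B 2 with hb
  have h1 : ∀ j, g1 * B j = b * p j := by
    intro j
    rw [hg1, hb]
    linear_combination c1 0 * hB 0 j + c1 1 * hB 1 j + c1 2 * hB 2 j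
  have h2 : g2 * b ∈ Ideal.span ({g1} : Set (PR 3)) := by
    have : g2 * b = g1 * (c2 0 * B 0 + c2 1 * B 1 + c2 2 * B 2) := by
      rw [hg2]
      linear_combination (-(c2 0)) * h1 0 - c2 1 * h1 1 - c2 2 * h1 2
    rw [this]
    exact Ideal.mem_span_singleton.2 (Dvd.intro _ rfl)
  obtain ⟨a, ha⟩ := Ideal.mem_span_singleton.1 (hreg2 b h2)
  refine ⟨a, fun i => ?_⟩
  apply mul_left_cancel₀ hreg1
  rw [h1 i, ha]; ring

include hg1 hg2 hg3 hreg1 hreg2 hreg3 in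
lemma lemA (D : Fin 3 → PR 3) (hD : p 0 * D 0 + p 1 * D 1 + p 2 * D 2 = 0) :
    ∃ E : Fin 3 → PR 3,
      D 0 = p 1 * E 2 - p 2 * E 1 ∧ D 1 = p 2 * E 0 - p 0 * E 2 ∧
      D 2 = p 0 * E 1 - p 1 * E 0 := by
  classical
  set A : Fin 3 → PR 3 :=
    ![ -(c1 1 * D 2) + c1 2 * D 1, c1 0 * D 2 - c1 2 * D 0, -(c1 0 * D 1) + c1 1 * D 0 ] with hA
  have cross0 : p 1 * A 2 - p 2 * A 1 = g1 * D 0 := by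
    simp only [hA]
    simp only [Matrix.cons_val_zero, Matrix.cons_val_one, Matrix.head_cons,
      Matrix.cons_val_two, Matrix.tail_cons]
    linear_combination (-(c1 0)) * hD - D 0 * hg1
  have cross1 : p 2 * A 0 - p 0 * A 2 = g1 * D 1 := by
    simp only [hA]
    simp only [Matrix.cons_val_zero, Matrix.cons_val_one, Matrix.head_cons,
      Matrix.cons_val_two, Matrix.tail_cons]
    linear_combination (-(c1 1)) * hD - D 1 * hg1
  have cross2 : p 0 * A 1 - p 1 * A 0 = g1 * D 2 := by
    simp only [hA]
    simp only [Matrix.cons_val_zero, Matrix.cons_val_one, Matrix.head_cons,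
      Matrix.cons_val_two, Matrix.tail_cons]
    linear_combination (-(c1 2)) * hD - D 2 * hg1
  have hAmem : ∀ i j, p i * A j - p j * A i ∈ Ideal.span ({g1} : Set (PR 3)) := by
    intro i j
    have hs : ∀ x : PR 3, g1 * x ∈ Ideal.span ({g1} : Set (PR 3)) := fun x =>
      Ideal.mem_span_singleton.2 (Dvd.intro _ rfl)
    fin_cases i <;> fin_cases j
    · simp
    · have h : p 0 * A 1 - p 1 * A 0 ∈ Ideal.span ({g1} : Set (PR 3)) := by
        rw [cross2]; exact hs _
      exact h
    · have h : p 0 * A 2 - p 2 * A 0 ∈ Ideal.span ({g1} : Set (PR 3)) := by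
        have e : p 0 * A 2 - p 2 * A 0 = g1 * (-D 1) := by linear_combination -cross1
        rw [e]; exact hs _
      exact h
    · have h : p 1 * A 0 - p 0 * A 1 ∈ Ideal.span ({g1} : Set (PR 3)) := by
        have e : p 1 * A 0 - p 0 * A 1 = g1 * (-D 2) := by linear_combination -cross2
        rw [e]; exact hs _
      exact h
    · simp
    · have h : p 1 * A 2 - p 2 * A 1 ∈ Ideal.span ({g1} : Set (PR 3)) := by
        rw [cross0]; exact hs _
      exact h
    · have h : p 2 * A 0 - p 0 * A 2 ∈ Ideal.span ({g1} : Set (PR 3)) := by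
        rw [cross1]; exact hs _
      exact h
    · have h : p 2 * A 1 - p 1 * A 2 ∈ Ideal.span ({g1} : Set (PR 3)) := by
        have e : p 2 * A 1 - p 1 * A 2 = g1 * (-D 0) := by linear_combination -cross0
        rw [e]; exact hs _
      exact h
    · simp
  obtain ⟨a, A', hA'⟩ := lemB p g1 g2 g3 c2 c3 hg2 hg3 hreg2 hreg3 A hAmem
  refine ⟨A', ?_, ?_, ?_⟩
  · apply mul_left_cancel₀ hreg1
    rw [← cross0, hA' 1, hA' 2]; ring
  · apply mul_left_cancel₀ hreg1
    rw [← cross1, hA' 2, hA' 0]; ring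
  · apply mul_left_cancel₀ hreg1
    rw [← cross2, hA' 0, hA' 1]; ring
end Syzygy

-- ===================== determinant biderivations/triderivations =====================

/-- 3×3 determinant of rows. -/
def det3 (a b c : Fin 3 → PR 3) : PR 3 :=
  a 0 * (b 1 * c 2 - b 2 * c 1) - a 1 * (b 0 * c 2 - b 2 * c 0) + a 2 * (b 0 * c 1 - b 1 * c 0)

/-- gradient -/
def gr (g : PR 3) : Fin 3 → PR 3 := fun i => pderiv i g

lemma gr_add (g h : PR 3) (i : Fin 3) : gr (g + h) i = gr g i + gr h i := by simp [gr]
lemma gr_smul (c : ℂ) (g : PR 3) (i : Fin 3) : gr (c • g) i = c • gr g i := by simp [gr]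
lemma gr_mul (g h : PR 3) (i : Fin 3) : gr (g * h) i = g * gr h i + h * gr g i := by
  simp [gr, pderiv_mul]

def bider (c : Fin 3 → PR 3) : (Fin 2 → PR 3) → PR 3 :=
  fun v => det3 c (gr (v 0)) (gr (v 1))

def trider (f : PR 3) : (Fin 3 → PR 3) → PR 3 :=
  fun v => f * det3 (gr (v 0)) (gr (v 1)) (gr (v 2))

lemma bider_upd0 (c : Fin 3 → PR 3) (v : Fin 2 → PR 3) (x : PR 3) :
    bider c (Function.update v 0 x) = det3 c (gr x) (gr (v 1)) := by
  rw [upd2_0]; rfl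

lemma bider_upd1 (c : Fin 3 → PR 3) (v : Fin 2 → PR 3) (x : PR 3) :
    bider c (Function.update v 1 x) = det3 c (gr (v 0)) (gr x) := by
  rw [upd2_1]; rfl

lemma bider_md (c : Fin 3 → PR 3) : IsMultiDeriv 2 (bider c) := by
  refine ⟨?_, ?_, ?_, ?_⟩
  · intro v i g h
    fin_cases i
    · show bider c (Function.update v 0 (g + h)) =
        bider c (Function.update v 0 g) + bider c (Function.update v 0 h)
      rw [bider_upd0, bider_upd0, bider_upd0]
      simp only [det3, gr_add]; simp only [gr]; ring
    · show bider c (Function.update v 1 (g + h)) =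
        bider c (Function.update v 1 g) + bider c (Function.update v 1 h)
      rw [bider_upd1, bider_upd1, bider_upd1]
      simp only [det3, gr_add]; simp only [gr]; ring
  · intro v i cc g
    fin_cases i
    · show bider c (Function.update v 0 (cc • g)) = cc • bider c (Function.update v 0 g)
      rw [bider_upd0, bider_upd0]
      simp only [det3, gr_smul, gr, smul_eq_C_mul, pderiv_C_mul]; ring
    · show bider c (Function.update v 1 (cc • g)) = cc • bider c (Function.update v 1 g)
      rw [bider_upd1, bider_upd1]
      simp only [det3, gr_smul, gr, smul_eq_C_mul, pderiv_C_mul]; ring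
  · intro v i j hij hv
    fin_cases i <;> fin_cases j
    · exact absurd rfl hij
    · have h2 : v 0 = v 1 := hv
      show det3 c (gr (v 0)) (gr (v 1)) = 0
      rw [h2]; simp only [det3]; ring
    · have h2 : v 1 = v 0 := hv
      show det3 c (gr (v 0)) (gr (v 1)) = 0
      rw [h2]; simp only [det3]; ring
    · exact absurd rfl hij
  · intro v i g h
    fin_cases i
    · show bider c (Function.update v 0 (g * h)) =
        g * bider c (Function.update v 0 h) + h * bider c (Function.update v 0 g)
      rw [bider_upd0, bider_upd0, bider_upd0]
      simp only [det3, gr_mul]; simp only [gr]; ring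
    · show bider c (Function.update v 1 (g * h)) =
        g * bider c (Function.update v 1 h) + h * bider c (Function.update v 1 g)
      rw [bider_upd1, bider_upd1, bider_upd1]
      simp only [det3, gr_mul]; simp only [gr]; ring

lemma trider_upd0 (f : PR 3) (v : Fin 3 → PR 3) (x : PR 3) :
    trider f (Function.update v 0 x) = f * det3 (gr x) (gr (v 1)) (gr (v 2)) := by
  rw [upd3_0]; rfl

lemma trider_upd1 (f : PR 3) (v : Fin 3 → PR 3) (x : PR 3) :
    trider f (Function.update v 1 x) = f * det3 (gr (v 0)) (gr x) (gr (v 2)) := by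
  rw [upd3_1]; rfl

lemma trider_upd2 (f : PR 3) (v : Fin 3 → PR 3) (x : PR 3) :
    trider f (Function.update v 2 x) = f * det3 (gr (v 0)) (gr (v 1)) (gr x) := by
  rw [upd3_2]; rfl

lemma trider_md (f : PR 3) : IsMultiDeriv 3 (trider f) := by
  refine ⟨?_, ?_, ?_, ?_⟩
  · intro v i g h
    fin_cases i
    · show trider f (Function.update v 0 (g + h)) =
        trider f (Function.update v 0 g) + trider f (Function.update v 0 h)
      rw [trider_upd0, trider_upd0, trider_upd0]
      simp only [det3, gr_add]; simp only [gr]; ring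
    · show trider f (Function.update v 1 (g + h)) =
        trider f (Function.update v 1 g) + trider f (Function.update v 1 h)
      rw [trider_upd1, trider_upd1, trider_upd1]
      simp only [det3, gr_add]; simp only [gr]; ring
    · show trider f (Function.update v 2 (g + h)) =
        trider f (Function.update v 2 g) + trider f (Function.update v 2 h)
      rw [trider_upd2, trider_upd2, trider_upd2]
      simp only [det3, gr_add]; simp only [gr]; ring
  · intro v i cc g
    fin_cases i
    · show trider f (Function.update v 0 (cc • g)) = cc • trider f (Function.update v 0 g)
      rw [trider_upd0, trider_upd0]
      simp only [det3, gr_smul, gr, smul_eq_C_mul, pderiv_C_mul]; ring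
    · show trider f (Function.update v 1 (cc • g)) = cc • trider f (Function.update v 1 g)
      rw [trider_upd1, trider_upd1]
      simp only [det3, gr_smul, gr, smul_eq_C_mul, pderiv_C_mul]; ring
    · show trider f (Function.update v 2 (cc • g)) = cc • trider f (Function.update v 2 g)
      rw [trider_upd2, trider_upd2]
      simp only [det3, gr_smul, gr, smul_eq_C_mul, pderiv_C_mul]; ring
  · intro v i j hij hv
    fin_cases i <;> fin_cases j
    · exact absurd rfl hij
    · have h2 : v 0 = v 1 := hv
      show trider f v = 0
      show f * det3 (gr (v 0)) (gr (v 1)) (gr (v 2)) = 0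
      rw [h2]; simp only [det3]; ring
    · have h2 : v 0 = v 2 := hv
      show f * det3 (gr (v 0)) (gr (v 1)) (gr (v 2)) = 0
      rw [h2]; simp only [det3]; ring
    · have h2 : v 1 = v 0 := hv
      show f * det3 (gr (v 0)) (gr (v 1)) (gr (v 2)) = 0
      rw [h2]; simp only [det3]; ring
    · exact absurd rfl hij
    · have h2 : v 1 = v 2 := hv
      show f * det3 (gr (v 0)) (gr (v 1)) (gr (v 2)) = 0
      rw [h2]; simp only [det3]; ring
    · have h2 : v 2 = v 0 := hv
      show f * det3 (gr (v 0)) (gr (v 1)) (gr (v 2)) = 0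
      rw [h2]; simp only [det3]; ring
    · have h2 : v 2 = v 1 := hv
      show f * det3 (gr (v 0)) (gr (v 1)) (gr (v 2)) = 0
      rw [h2]; simp only [det3]; ring
    · exact absurd rfl hij
  · intro v i g h
    fin_cases i
    · show trider f (Function.update v 0 (g * h)) =
        g * trider f (Function.update v 0 h) + h * trider f (Function.update v 0 g)
      rw [trider_upd0, trider_upd0, trider_upd0]
      simp only [det3, gr_mul]; simp only [gr]; ring
    · show trider f (Function.update v 1 (g * h)) =
        g * trider f (Function.update v 1 h) + h * trider f (Function.update v 1 g)
      rw [trider_upd1, trider_upd1, trider_upd1]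
      simp only [det3, gr_mul]; simp only [gr]; ring
    · show trider f (Function.update v 2 (g * h)) =
        g * trider f (Function.update v 2 h) + h * trider f (Function.update v 2 g)
      rw [trider_upd2, trider_upd2, trider_upd2]
      simp only [det3, gr_mul]; simp only [gr]; ring

lemma dphi_trider (f φ : PR 3) (v : Fin 2 → PR 3) :
    dphi φ (trider f) v = f * det3 (gr φ) (gr (v 0)) (gr (v 1)) := by
  rw [dphi, cons3]
  show trider f ![φ, v 0, v 1] = _
  rw [trider]
  simp [Matrix.cons_val_zero, Matrix.cons_val_one, Matrix.head_cons,
    Matrix.cons_val_two, Matrix.tail_cons]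

-- ===================== the Jacobi identity =====================

section Jac
variable (f φ : PR 3)

def PP (g h : PR 3) : PR 3 := f * det3 (gr φ) (gr g) (gr h)

lemma PP_antisym (g h : PR 3) : PP f φ g h = -PP f φ h g := by
  simp only [PP, det3]; ring

lemma PP_add1 (g g' h : PR 3) : PP f φ (g + g') h = PP f φ g h + PP f φ g' h := by
  simp only [PP, det3, gr, map_add]; ring

lemma PP_add2 (g h h' : PR 3) : PP f φ g (h + h') = PP f φ g h + PP f φ g h' := by
  simp only [PP, det3, gr, map_add]; ring

lemma PP_smul1 (c : ℂ) (g h : PR 3) : PP f φ (c • g) h = c • PP f φ g h := by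
  simp only [PP, det3, gr, smul_eq_C_mul, pderiv_C_mul]; ring

lemma PP_smul2 (c : ℂ) (g h : PR 3) : PP f φ g (c • h) = c • PP f φ g h := by
  simp only [PP, det3, gr, smul_eq_C_mul, pderiv_C_mul]; ring

lemma PP_mul1 (g g' h : PR 3) : PP f φ (g * g') h = g * PP f φ g' h + g' * PP f φ g h := by
  simp only [PP, det3, gr, pderiv_mul]; ring

lemma PP_mul2 (g h h' : PR 3) : PP f φ g (h * h') = h * PP f φ g h' + h' * PP f φ g h := by
  simp only [PP, det3, gr, pderiv_mul]; ring

def JJ (g h k : PR 3) : PR 3 :=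
  PP f φ g (PP f φ h k) + PP f φ h (PP f φ k g) + PP f φ k (PP f φ g h)

lemma JJ_cyc (g h k : PR 3) : JJ f φ g h k = JJ f φ h k g := by
  simp only [JJ]; ring

lemma JJ_add1 (g g' h k : PR 3) :
    JJ f φ (g + g') h k = JJ f φ g h k + JJ f φ g' h k := by
  simp only [JJ, PP_add1, PP_add2]; ring

lemma JJ_smul1 (c : ℂ) (g h k : PR 3) : JJ f φ (c • g) h k = c • JJ f φ g h k := by
  simp only [JJ, PP_smul1, PP_smul2, smul_add]

lemma JJ_mul1 (g g' h k : PR 3) :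
    JJ f φ (g * g') h k = g * JJ f φ g' h k + g' * JJ f φ g h k := by
  simp only [JJ, PP_mul1, PP_mul2, PP_add2]
  linear_combination (PP f φ k g') * PP_antisym f φ g h + (PP f φ k g) * PP_antisym f φ g' h

set_option maxHeartbeats 4000000 in
lemma JJ_X (a b c : Fin 3) : JJ f φ (X a) (X b) (X c) = 0 := by
  have c10 : pderiv (1:Fin 3) (pderiv 0 φ) = pderiv 0 (pderiv 1 φ) := pd_comm 1 0 φ
  have c20 : pderiv (2:Fin 3) (pderiv 0 φ) = pderiv 0 (pderiv 2 φ) := pd_comm 2 0 φ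
  have c21 : pderiv (2:Fin 3) (pderiv 1 φ) = pderiv 1 (pderiv 2 φ) := pd_comm 2 1 φ
  fin_cases a <;> fin_cases b <;> fin_cases c <;>
    simp only [Fin.zero_eta, Fin.mk_one, Fin.isValue,
      show (⟨2, by omega⟩ : Fin 3) = 2 from rfl] <;>
  · simp only [JJ, PP, det3, gr, pderiv_X, Pi.single_apply]
    simp [pderiv_mul, c10, c20, c21]
    try ring

lemma JJ_zero (g h k : PR 3) : JJ f φ g h k = 0 := by
  have step : ∀ (h k : PR 3), (∀ i : Fin 3, JJ f φ (X i) h k = 0) → ∀ g, JJ f φ g h k = 0 := by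
    intro h k hXi g
    rw [deriv_rep (fun g => JJ f φ g h k) (fun a b => JJ_add1 f φ a b h k)
      (fun c a => JJ_smul1 f φ c a h k) (fun a b => JJ_mul1 f φ a b h k) g]
    simp [hXi]
  have L2 : ∀ (a b : Fin 3) (kk : PR 3), JJ f φ kk (X a) (X b) = 0 := by
    intro a b kk
    exact step (X a) (X b) (fun i => JJ_X f φ i a b) kk
  have L1 : ∀ (a : Fin 3) (hh kk : PR 3), JJ f φ kk hh (X a) = 0 := by
    intro a hh kk
    have : ∀ i : Fin 3, JJ f φ (X i) hh (X a) = 0 := by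
      intro i
      rw [JJ_cyc]
      exact L2 a i hh
    exact step hh (X a) this kk
  have L0 : ∀ i : Fin 3, JJ f φ (X i) h k = 0 := by
    intro i
    rw [JJ_cyc]
    exact L1 i k h
  exact step h k L0 g

end Jac

set_option maxHeartbeats 4000000

/-- For a nonconstant `φ ∈ ℂ[x₁,x₂,x₃]` whose partial
derivatives have finitely many common zeros, and an antisymmetric biderivation
`β ∈ 𝔛²` with `β(φ,·)` `(φ)`-valued, there are `X₂ ∈ 𝔛²`, `X₃ ∈ 𝔛³` with
`β = d_φ X₃ + φ·X₂`, and `β₀ := d_φ X₃` is a Poisson bracket on `R` (a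
biderivation with identically vanishing Jacobiator) which agrees with `β`
modulo `(φ)` and satisfies `β₀(φ,f) = 0` for all `f`. -/
theorem dim3_extension_is_poisson (φ : PR 3)
    (hφ : ∀ c : ℂ, φ ≠ MvPolynomial.C c)
    (hfin : Set.Finite {x : Fin 3 → ℂ | ∀ i : Fin 3,
      MvPolynomial.eval x (MvPolynomial.pderiv i φ) = 0})
    (β : (Fin 2 → PR 3) → PR 3) (hβ : IsMultiDeriv 2 β)
    (hβφ : ∀ f : PR 3, β ![φ, f] ∈ Ideal.span {φ}) :
    ∃ (X₂ : (Fin 2 → PR 3) → PR 3) (X₃ : (Fin 3 → PR 3) → PR 3),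
      IsMultiDeriv 2 X₂ ∧ IsMultiDeriv 3 X₃ ∧
      (∀ v : Fin 2 → PR 3, β v = dphi φ X₃ v + φ * X₂ v) ∧
      IsMultiDeriv 2 (dphi φ X₃) ∧
      (∀ f g h : PR 3,
        dphi φ X₃ ![f, dphi φ X₃ ![g, h]]
          + dphi φ X₃ ![g, dphi φ X₃ ![h, f]]
          + dphi φ X₃ ![h, dphi φ X₃ ![f, g]] = 0) ∧
      (∀ v : Fin 2 → PR 3, β v - dphi φ X₃ v ∈ Ideal.span {φ}) ∧
      (∀ f : PR 3, dphi φ X₃ ![φ, f] = 0) := by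
  classical
  have hφ0 : φ ≠ 0 := fun h => hφ 0 (by rw [h]; simp)
  set p : Fin 3 → PR 3 := fun i => pderiv i φ with hpdef
  have hpv : ∀ i, p i = pderiv i φ := fun i => rfl
  -- the coefficients of β
  set b0 : PR 3 := β ![X 1, X 2] with hb0
  set b1 : PR 3 := β ![X 2, X 0] with hb1
  set b2 : PR 3 := β ![X 0, X 1] with hb2
  -- evaluate β (φ, X k)
  have hk0 : β ![φ, X 0] = -(p 1 * b2 - p 2 * b1) := by
    rw [bd_rep hβ φ (X 0), Fin.sum_univ_three, Fin.sum_univ_three, Fin.sum_univ_three,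
      Fin.sum_univ_three]
    rw [bd_alt hβ (X 0), bd_antisym hβ (X 1) (X 0)]
    simp [pderiv_X, Pi.single_apply, hb1, hb2]
    ring
  have hk1 : β ![φ, X 1] = -(p 2 * b0 - p 0 * b2) := by
    rw [bd_rep hβ φ (X 1), Fin.sum_univ_three, Fin.sum_univ_three, Fin.sum_univ_three,
      Fin.sum_univ_three]
    rw [bd_alt hβ (X 1), bd_antisym hβ (X 2) (X 1)]
    simp [pderiv_X, Pi.single_apply, hb0, hb2]
    ring
  have hk2 : β ![φ, X 2] = -(p 0 * b1 - p 1 * b0) := by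
    rw [bd_rep hβ φ (X 2), Fin.sum_univ_three, Fin.sum_univ_three, Fin.sum_univ_three,
      Fin.sum_univ_three]
    rw [bd_alt hβ (X 2), bd_antisym hβ (X 0) (X 2)]
    simp [pderiv_X, Pi.single_apply, hb0, hb1]
    ring
  -- divide by φ
  have hdvd0 : ∃ t, p 1 * b2 - p 2 * b1 = φ * t := by
    have h := hβφ (X 0); rw [hk0] at h
    have h2 := neg_mem h
    rw [neg_neg] at h2
    exact Ideal.mem_span_singleton.1 h2
  have hdvd1 : ∃ t, p 2 * b0 - p 0 * b2 = φ * t := by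
    have h := hβφ (X 1); rw [hk1] at h
    have h2 := neg_mem h
    rw [neg_neg] at h2
    exact Ideal.mem_span_singleton.1 h2
  have hdvd2 : ∃ t, p 0 * b1 - p 1 * b0 = φ * t := by
    have h := hβφ (X 2); rw [hk2] at h
    have h2 := neg_mem h
    rw [neg_neg] at h2
    exact Ideal.mem_span_singleton.1 h2
  obtain ⟨t0, ht0⟩ := hdvd0
  obtain ⟨t1, ht1⟩ := hdvd1
  obtain ⟨t2, ht2⟩ := hdvd2
  -- t is a syzygy of p
  have hsyz : p 0 * t0 + p 1 * t1 + p 2 * t2 = 0 := by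
    apply mul_left_cancel₀ hφ0
    rw [mul_zero]
    calc φ * (p 0 * t0 + p 1 * t1 + p 2 * t2)
        = p 0 * (φ * t0) + p 1 * (φ * t1) + p 2 * (φ * t2) := by ring
      _ = p 0 * (p 1 * b2 - p 2 * b1) + p 1 * (p 2 * b0 - p 0 * b2)
          + p 2 * (p 0 * b1 - p 1 * b0) := by rw [← ht0, ← ht1, ← ht2]
      _ = 0 := by ring
  -- monic univariate elements of the gradient ideal
  obtain ⟨u0, hu0m, hu0i⟩ := monic_in_ideal φ hfin 0
  obtain ⟨u1, hu1m, hu1i⟩ := monic_in_ideal φ hfin 1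
  obtain ⟨u2, hu2m, hu2i⟩ := monic_in_ideal φ hfin 2
  set g1 : PR 3 := Polynomial.aeval (X 2) u2 with hg1def
  set g2 : PR 3 := Polynomial.aeval (X 1) u1 with hg2def
  set g3 : PR 3 := Polynomial.aeval (X 0) u0 with hg3def
  obtain ⟨c1, hc1⟩ := Ideal.mem_span_range_iff_exists_fun.1 hu2i
  obtain ⟨c2, hc2⟩ := Ideal.mem_span_range_iff_exists_fun.1 hu1i
  obtain ⟨c3, hc3⟩ := Ideal.mem_span_range_iff_exists_fun.1 hu0i
  have hg1 : g1 = c1 0 * p 0 + c1 1 * p 1 + c1 2 * p 2 := by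
    rw [← hc1, Fin.sum_univ_three]
  have hg2 : g2 = c2 0 * p 0 + c2 1 * p 1 + c2 2 * p 2 := by
    rw [← hc2, Fin.sum_univ_three]
  have hg3 : g3 = c3 0 * p 0 + c3 1 * p 1 + c3 2 * p 2 := by
    rw [← hc3, Fin.sum_univ_three]
  -- regularity
  have haeval_ne : ∀ (j : Fin 3) (u : Polynomial ℂ), u.Monic →
      Polynomial.aeval (X j : PR 3) u ≠ 0 := by
    intro j u hu h0
    have hpt : (MvPolynomial.aeval (fun i => if i = j then Polynomial.X else 0 :
        Fin 3 → Polynomial ℂ)) (X j : PR 3) = Polynomial.X := by simp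
    have := Polynomial.aeval_algHom_apply
      (MvPolynomial.aeval (fun i => if i = j then Polynomial.X else 0 : Fin 3 → Polynomial ℂ))
      (X j : PR 3) u
    rw [hpt, h0, map_zero, Polynomial.aeval_X_left_apply] at this
    exact hu.ne_zero this
  have hreg1 : g1 ≠ 0 := haeval_ne 2 u2 hu2m
  have hreg2 : ∀ h : PR 3, g2 * h ∈ Ideal.span {g1} → h ∈ Ideal.span {g1} := by
    intro h hm
    refine key_var 1 u1 hu1m {g1} ?_ h hm
    rintro q rfl
    exact ⟨2, u2, by decide, hg1def⟩
  have hreg3 : ∀ h : PR 3, g3 * h ∈ Ideal.span ({g1, g2} : Set (PR 3)) →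
      h ∈ Ideal.span ({g1, g2} : Set (PR 3)) := by
    intro h hm
    refine key_var 0 u0 hu0m {g1, g2} ?_ h hm
    rintro q (rfl | rfl)
    · exact ⟨2, u2, by decide, hg1def⟩
    · exact ⟨1, u1, by decide, hg2def⟩
  -- solve the syzygy
  obtain ⟨E, hE⟩ := lemA p g1 g2 g3 c1 c2 c3 hg1 hg2 hg3 hreg1 hreg2 hreg3 ![t0, t1, t2]
    (by exact hsyz)
  have hE0 : t0 = p 1 * E 2 - p 2 * E 1 := hE.1
  have hE1 : t1 = p 2 * E 0 - p 0 * E 2 := hE.2.1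
  have hE2 : t2 = p 0 * E 1 - p 1 * E 0 := hE.2.2
  -- b - φ E is proportional to p
  set B : Fin 3 → PR 3 := ![b0 - φ * E 0, b1 - φ * E 1, b2 - φ * E 2] with hBdef
  have hB : ∀ i j, p i * B j = p j * B i := by
    intro i j
    fin_cases i <;> fin_cases j
    · rfl
    · show p 0 * (b1 - φ * E 1) = p 1 * (b0 - φ * E 0)
      linear_combination ht2 + φ * hE2
    · show p 0 * (b2 - φ * E 2) = p 2 * (b0 - φ * E 0)
      linear_combination -ht1 - φ * hE1
    · show p 1 * (b0 - φ * E 0) = p 0 * (b1 - φ * E 1)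
      linear_combination -ht2 - φ * hE2
    · rfl
    · show p 1 * (b2 - φ * E 2) = p 2 * (b1 - φ * E 1)
      linear_combination ht0 + φ * hE0
    · show p 2 * (b0 - φ * E 0) = p 0 * (b2 - φ * E 2)
      linear_combination ht1 + φ * hE1
    · show p 2 * (b1 - φ * E 1) = p 1 * (b2 - φ * E 2)
      linear_combination -ht0 - φ * hE0
    · rfl
  obtain ⟨f, hf⟩ := lemH2 p g1 g2 c1 c2 hg1 hg2 hreg1 hreg2 B hB
  have hbf0 : b0 = f * p 0 + φ * E 0 := by
    have h := hf 0
    have h' : b0 - φ * E 0 = f * p 0 := h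
    linear_combination h'
  have hbf1 : b1 = f * p 1 + φ * E 1 := by
    have h := hf 1
    have h' : b1 - φ * E 1 = f * p 1 := h
    linear_combination h'
  have hbf2 : b2 = f * p 2 + φ * E 2 := by
    have h := hf 2
    have h' : b2 - φ * E 2 = f * p 2 := h
    linear_combination h'
  -- β equals the coefficient biderivation
  have w00 : bider ![b0, b1, b2] ![X 0, X 0] = 0 := by
    simp [bider, det3, gr, pderiv_X, Pi.single_apply]
  have w01 : bider ![b0, b1, b2] ![X 0, X 1] = b2 := by
    simp [bider, det3, gr, pderiv_X, Pi.single_apply]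
  have w02 : bider ![b0, b1, b2] ![X 0, X 2] = -b1 := by
    simp [bider, det3, gr, pderiv_X, Pi.single_apply]
  have w10 : bider ![b0, b1, b2] ![X 1, X 0] = -b2 := by
    simp [bider, det3, gr, pderiv_X, Pi.single_apply]
  have w11 : bider ![b0, b1, b2] ![X 1, X 1] = 0 := by
    simp [bider, det3, gr, pderiv_X, Pi.single_apply]
  have w12 : bider ![b0, b1, b2] ![X 1, X 2] = b0 := by
    simp [bider, det3, gr, pderiv_X, Pi.single_apply]
  have w20 : bider ![b0, b1, b2] ![X 2, X 0] = b1 := by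
    simp [bider, det3, gr, pderiv_X, Pi.single_apply]
  have w21 : bider ![b0, b1, b2] ![X 2, X 1] = -b0 := by
    simp [bider, det3, gr, pderiv_X, Pi.single_apply]
  have w22 : bider ![b0, b1, b2] ![X 2, X 2] = 0 := by
    simp [bider, det3, gr, pderiv_X, Pi.single_apply]
  have q00 : β ![X 0, X 0] = bider ![b0, b1, b2] ![X 0, X 0] := by
    rw [w00]; exact bd_alt hβ (X 0)
  have q01 : β ![X 0, X 1] = bider ![b0, b1, b2] ![X 0, X 1] := by
    rw [w01]
  have q02 : β ![X 0, X 2] = bider ![b0, b1, b2] ![X 0, X 2] := by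
    rw [w02, hb1]; exact bd_antisym hβ (X 0) (X 2)
  have q10 : β ![X 1, X 0] = bider ![b0, b1, b2] ![X 1, X 0] := by
    rw [w10, hb2]; exact bd_antisym hβ (X 1) (X 0)
  have q11 : β ![X 1, X 1] = bider ![b0, b1, b2] ![X 1, X 1] := by
    rw [w11]; exact bd_alt hβ (X 1)
  have q12 : β ![X 1, X 2] = bider ![b0, b1, b2] ![X 1, X 2] := by
    rw [w12]
  have q20 : β ![X 2, X 0] = bider ![b0, b1, b2] ![X 2, X 0] := by
    rw [w20]
  have q21 : β ![X 2, X 1] = bider ![b0, b1, b2] ![X 2, X 1] := by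
    rw [w21, hb0]; exact bd_antisym hβ (X 2) (X 1)
  have q22 : β ![X 2, X 2] = bider ![b0, b1, b2] ![X 2, X 2] := by
    rw [w22]; exact bd_alt hβ (X 2)
  have hβb : ∀ v, β v = bider ![b0, b1, b2] v := by
    apply bd_ext hβ (bider_md _)
    intro i j
    fin_cases i <;> fin_cases j
    · exact q00
    · exact q01
    · exact q02
    · exact q10
    · exact q11
    · exact q12
    · exact q20
    · exact q21
    · exact q22
  -- the bracket
  have hPd : ∀ g h : PR 3, dphi φ (trider f) ![g, h] = PP f φ g h := by
    intro g h
    rw [dphi_trider]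
    rfl
  refine ⟨bider E, trider f, bider_md E, trider_md f, ?_, ?_, ?_, ?_, ?_⟩
  · -- decomposition
    intro v
    rw [hβb v, dphi_trider]
    show det3 ![b0, b1, b2] (gr (v 0)) (gr (v 1)) = _ + φ * det3 E (gr (v 0)) (gr (v 1))
    simp only [det3, Matrix.cons_val_zero, Matrix.cons_val_one, Matrix.head_cons,
      Matrix.cons_val_two, Matrix.tail_cons]
    rw [hbf0, hbf1, hbf2]
    simp only [hpv, gr]
    ring
  · -- IsMultiDeriv 2 (dphi φ (trider f))
    have heq : dphi φ (trider f) = bider (fun i => f * p i) := by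
      funext v
      rw [dphi_trider]
      show _ = det3 (fun i => f * p i) (gr (v 0)) (gr (v 1))
      simp only [det3, hpv, gr]
      ring
    rw [heq]
    exact bider_md _
  · -- Jacobi identity
    intro g h k
    rw [hPd h k, hPd k g, hPd g h, hPd g (PP f φ h k), hPd h (PP f φ k g), hPd k (PP f φ g h)]
    exact JJ_zero f φ g h k
  · -- difference lies in (φ)
    intro v
    have hd : β v - dphi φ (trider f) v = φ * bider E v := by
      rw [hβb v, dphi_trider]
      show det3 ![b0, b1, b2] (gr (v 0)) (gr (v 1)) - _ = φ * det3 E (gr (v 0)) (gr (v 1))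
      simp only [det3, Matrix.cons_val_zero, Matrix.cons_val_one, Matrix.head_cons,
        Matrix.cons_val_two, Matrix.tail_cons]
      rw [hbf0, hbf1, hbf2]
      simp only [hpv, gr]
      ring
    rw [hd]
    exact Ideal.mem_span_singleton.2 (Dvd.intro _ rfl)
  · -- vanishing on φ
    intro g
    rw [hPd φ g]
    simp only [PP, det3]
    ring
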